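/- arXiv:2101.03546 — 3 statements merged into one kernel-verified Lean document; each statement's English description precedes it below -/
import Mathlib

section
/- Let T ⊆ E be a tree subgraph of a finite simple graph G = (V, E), let {v, w} ∈ T, let k ∈ V(T) be distinct from v and w, and suppose {w, k} ∈ E. If k and v are connected in the subgraph with edge set T ∖ {{v, w}}, then T' := (T ∖ {{v, w}}) ∪ {{w, k}} is a tree subgraph with V(T') = V(T). -/
variable {V : Type*} [Fintype V] [DecidableEq V]

/-- The set of endpoints of the edges of an edge set `T` (the vertices "visited" by `T`). -/
def edgeVerts (T : Finset (Sym2 V)) : Finset V :=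
  Finset.univ.filter (fun v => ∃ e ∈ T, v ∈ e)

/-- Two vertices are connected in an edge set `T` if there is a path between them
using only edges of `T`. -/
def ConnIn (T : Finset (Sym2 V)) (u w : V) : Prop :=
  (SimpleGraph.fromEdgeSet (↑T : Set (Sym2 V))).Reachable u w

/-- A tree subgraph of `G` is a nonempty edge set `T ⊆ E(G)` whose induced subgraph is
connected and acyclic. -/
def IsTreeSubgraph (G : SimpleGraph V) (T : Finset (Sym2 V)) : Prop :=
  (↑T : Set (Sym2 V)) ⊆ G.edgeSet ∧ T.Nonempty ∧
  (∀ u ∈ edgeVerts T, ∀ w ∈ edgeVerts T, ConnIn T u w) ∧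
  (SimpleGraph.fromEdgeSet (↑T : Set (Sym2 V))).IsAcyclic

open SimpleGraph

set_option linter.unusedSectionVars false

lemma sdiff_fromEdgeSet_eq (S : Finset (Sym2 V)) (e : Sym2 V) :
    SimpleGraph.fromEdgeSet (↑S : Set (Sym2 V)) \ SimpleGraph.fromEdgeSet {e}
      = SimpleGraph.fromEdgeSet (↑(S.erase e) : Set (Sym2 V)) := by
  ext a b
  simp only [sdiff_adj, fromEdgeSet_adj, Finset.coe_erase, Set.mem_diff, Finset.mem_coe,
    Set.mem_singleton_iff]
  tauto

lemma connIn_mono {S S' : Finset (Sym2 V)} (h : S ⊆ S') {a b : V} (hc : ConnIn S a b) :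
    ConnIn S' a b :=
  hc.mono (SimpleGraph.fromEdgeSet_mono (by exact_mod_cast h))

lemma connIn_refl (S : Finset (Sym2 V)) (a : V) : ConnIn S a a := Reachable.refl a

lemma connIn_of_mem {S : Finset (Sym2 V)} {a b : V} (h : s(a,b) ∈ S) (hne : a ≠ b) :
    ConnIn S a b :=
  SimpleGraph.Adj.reachable (by rw [fromEdgeSet_adj]; exact ⟨h, hne⟩)

lemma ConnIn.trans {S : Finset (Sym2 V)} {a b c : V} (h : ConnIn S a b) (h' : ConnIn S b c) :
    ConnIn S a c := Reachable.trans h h'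

lemma ConnIn.symm {S : Finset (Sym2 V)} {a b : V} (h : ConnIn S a b) : ConnIn S b a :=
  Reachable.symm h

/-- Lemma B: decompose reachability after inserting one edge. -/
lemma connIn_insert_elim {S : Finset (Sym2 V)} {x y a b : V}
    (h : ConnIn (insert s(x,y) S) a b) :
    ConnIn S a b ∨ (ConnIn S a x ∧ ConnIn S y b) ∨ (ConnIn S a y ∧ ConnIn S x b) := by
  obtain ⟨p⟩ := h
  induction p with
  | nil => exact Or.inl (connIn_refl _ _)
  | cons h p ih =>
    rename_i a c b
    rw [fromEdgeSet_adj, Finset.coe_insert, Set.mem_insert_iff] at h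
    obtain ⟨hmem | hmem, hne⟩ := h
    · -- s(a,c) = s(x,y)
      rw [Sym2.eq_iff] at hmem
      rcases hmem with ⟨rfl, rfl⟩ | ⟨rfl, rfl⟩
      · rcases ih with h1 | ⟨h1, h2⟩ | ⟨h1, h2⟩
        · exact Or.inr (Or.inl ⟨connIn_refl _ _, h1⟩)
        · exact Or.inl ((h1.symm).trans h2)
        · exact Or.inl h2
      · rcases ih with h1 | ⟨h1, h2⟩ | ⟨h1, h2⟩
        · exact Or.inr (Or.inr ⟨connIn_refl _ _, h1⟩)
        · exact Or.inl h2
        · exact Or.inl ((h1.symm).trans h2)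
    · -- s(a,c) ∈ S
      have hac : ConnIn S a c := connIn_of_mem hmem hne
      rcases ih with h1 | ⟨h1, h2⟩ | ⟨h1, h2⟩
      · exact Or.inl (hac.trans h1)
      · exact Or.inr (Or.inl ⟨hac.trans h1, h2⟩)
      · exact Or.inr (Or.inr ⟨hac.trans h1, h2⟩)

/-- Lemma A: in an acyclic edge set, endpoints of an edge are not connected without it. -/
lemma not_connIn_erase {T : Finset (Sym2 V)}
    (hac : (SimpleGraph.fromEdgeSet (↑T : Set (Sym2 V))).IsAcyclic)
    {a b : V} (hab : s(a,b) ∈ T) (hne : a ≠ b) :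
    ¬ ConnIn (T.erase s(a,b)) a b := by
  have hadj : (SimpleGraph.fromEdgeSet (↑T : Set (Sym2 V))).Adj a b := by
    rw [fromEdgeSet_adj]; exact ⟨hab, hne⟩
  have hb := (isAcyclic_iff_forall_adj_isBridge.mp hac) hadj
  rw [isBridge_iff, SimpleGraph.deleteEdges, sdiff_fromEdgeSet_eq] at hb
  exact hb

lemma mem_edgeVerts_of_connIn {S : Finset (Sym2 V)} {a b : V}
    (h : ConnIn S a b) (hne : a ≠ b) : a ∈ edgeVerts S := by
  obtain ⟨p⟩ := h
  cases p with
  | nil => exact absurd rfl hne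
  | cons h p =>
    rw [fromEdgeSet_adj] at h
    simp only [edgeVerts, Finset.mem_filter, Finset.mem_univ, true_and]
    exact ⟨_, h.1, Sym2.mem_mk_left _ _⟩

lemma mem_edgeVerts_left {S : Finset (Sym2 V)} {a b : V} (h : s(a,b) ∈ S) :
    a ∈ edgeVerts S := by
  simp only [edgeVerts, Finset.mem_filter, Finset.mem_univ, true_and]
  exact ⟨s(a,b), h, Sym2.mem_mk_left _ _⟩

lemma mem_edgeVerts_right {S : Finset (Sym2 V)} {a b : V} (h : s(a,b) ∈ S) :
    b ∈ edgeVerts S := by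
  simp only [edgeVerts, Finset.mem_filter, Finset.mem_univ, true_and]
  exact ⟨s(a,b), h, Sym2.mem_mk_right _ _⟩

lemma edgeVerts_mono {S S' : Finset (Sym2 V)} (h : S ⊆ S') :
    edgeVerts S ⊆ edgeVerts S' := by
  intro u hu
  simp only [edgeVerts, Finset.mem_filter, Finset.mem_univ, true_and] at hu ⊢
  obtain ⟨e, he, hue⟩ := hu
  exact ⟨e, h he, hue⟩
/-- If {v, w} ∈ T, k ∈ V(T) is distinct from v and w, {w, k} ∈ E, and k is connected to v
in T ∖ {{v, w}}, then T'\'' = (T ∖ {{v, w}}) ∪ {{w, k}} is a tree subgraph with V(T'\'') = V(T). -/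
theorem tree_swap_edge_is_tree
    (G : SimpleGraph V) (T : Finset (Sym2 V)) (hT : IsTreeSubgraph G T)
    (v w k : V) (hvw : s(v, w) ∈ T)
    (hk : k ∈ edgeVerts T) (hkv : k ≠ v) (hkw : k ≠ w)
    (hwkE : s(w, k) ∈ G.edgeSet)
    (hreach : ConnIn (T.erase s(v, w)) k v) :
    IsTreeSubgraph G (insert s(w, k) (T.erase s(v, w))) ∧
      edgeVerts (insert s(w, k) (T.erase s(v, w))) = edgeVerts T := by
  obtain ⟨hTE, hTne, hTconn, hTac⟩ := hT
  set S := T.erase s(v, w) with hS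
  set T' := insert s(w, k) S with hT'
  have hvwne : v ≠ w := by
    have := hTE hvw
    rw [SimpleGraph.mem_edgeSet] at this
    exact this.ne
  have hwkne : w ≠ k := hkw.symm
  have hA_vw : ¬ ConnIn S v w := not_connIn_erase hTac hvw hvwne
  have hwk_not : ¬ ConnIn S w k := fun h => hA_vw ((h.trans hreach).symm)
  have hST : S ⊆ T := Finset.erase_subset _ _
  have hST' : S ⊆ T' := Finset.subset_insert _ _
  have hwkT' : s(w, k) ∈ T' := Finset.mem_insert_self _ _
  -- v ~ w in T'
  have hvwT' : ConnIn T' v w :=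
    ((connIn_mono hST' hreach).symm).trans (connIn_of_mem hwkT' hwkne).symm
  -- every vertex of T is connected to w in T'
  have keyconn : ∀ u ∈ edgeVerts T, ConnIn T' u w := by
    intro u hu
    have huv : ConnIn T u v := hTconn u hu v (mem_edgeVerts_left hvw)
    rw [← Finset.insert_erase hvw] at huv
    rcases connIn_insert_elim huv with h1 | ⟨h1, _⟩ | ⟨h1, _⟩
    · exact (connIn_mono hST' h1).trans hvwT'
    · exact (connIn_mono hST' h1).trans hvwT'
    · exact connIn_mono hST' h1
  -- edgeVerts equality
  have hEV : edgeVerts T' = edgeVerts T := by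
    apply Finset.Subset.antisymm
    · intro u hu
      simp only [edgeVerts, Finset.mem_filter, Finset.mem_univ, true_and] at hu ⊢
      obtain ⟨e, he, hue⟩ := hu
      rcases Finset.mem_insert.mp he with rfl | he'
      · rcases Sym2.mem_iff.mp hue with rfl | rfl
        · exact ⟨s(u, v), by rwa [Sym2.eq_swap], Sym2.mem_mk_left _ _⟩
        · simpa [edgeVerts] using hk
      · exact ⟨e, hST he', hue⟩
    · intro u hu
      simp only [edgeVerts, Finset.mem_filter, Finset.mem_univ, true_and] at hu
      obtain ⟨e, he, hue⟩ := hu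
      by_cases hevw : e = s(v, w)
      · subst hevw
        rcases Sym2.mem_iff.mp hue with rfl | rfl
        · exact edgeVerts_mono hST' (mem_edgeVerts_of_connIn hreach.symm hkv.symm)
        · exact mem_edgeVerts_left hwkT'
      · have : e ∈ T' := hST' (Finset.mem_erase.mpr ⟨hevw, he⟩)
        simp only [edgeVerts, Finset.mem_filter, Finset.mem_univ, true_and]
        exact ⟨e, this, hue⟩
  refine ⟨⟨?_, ⟨s(w, k), hwkT'⟩, ?_, ?_⟩, hEV⟩
  · -- edge subset
    intro e he
    rcases Finset.mem_insert.mp (by exact_mod_cast he) with rfl | he'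
    · exact hwkE
    · exact hTE (hST he')
  · -- connectivity
    intro u hu u' hu'
    rw [hEV] at hu hu'
    exact (keyconn u hu).trans (keyconn u' hu').symm
  · -- acyclicity
    rw [SimpleGraph.isAcyclic_iff_forall_adj_isBridge]
    intro a b hadj
    have hadj' := hadj
    rw [SimpleGraph.fromEdgeSet_adj] at hadj'
    obtain ⟨habT' , habne⟩ := hadj'
    rw [SimpleGraph.isBridge_iff, SimpleGraph.deleteEdges, sdiff_fromEdgeSet_eq]
    intro hr
    have h : ConnIn (T'.erase s(a, b)) a b := hr
    by_cases hwkcase : s(a, b) = s(w, k)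
    · -- the new edge
      have hsub : T'.erase s(a, b) ⊆ S := by
        intro x hx
        obtain ⟨hx1, hx2⟩ := Finset.mem_erase.mp hx
        rw [hwkcase] at hx1
        exact (Finset.mem_insert.mp hx2).resolve_left hx1
      have hS_ab : ConnIn S a b := connIn_mono hsub h
      rcases Sym2.eq_iff.mp hwkcase with ⟨rfl, rfl⟩ | ⟨rfl, rfl⟩
      · exact hwk_not hS_ab
      · exact hwk_not hS_ab.symm
    · -- an old edge
      have habS : s(a, b) ∈ S := (Finset.mem_insert.mp (Finset.mem_coe.mp habT')).resolve_left hwkcase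
      set S' := S.erase s(a, b) with hS'
      have hA_e : ¬ ConnIn (T.erase s(a, b)) a b :=
        not_connIn_erase hTac (hST habS) habne
      have hS'S : S' ⊆ S := Finset.erase_subset _ _
      have hS'sub : S' ⊆ T.erase s(a, b) := by
        intro x hx
        obtain ⟨hx1, hx2⟩ := Finset.mem_erase.mp hx
        exact Finset.mem_erase.mpr ⟨hx1, (Finset.mem_erase.mp hx2).2⟩
      have hvw' : s(v, w) ∈ T.erase s(a, b) :=
        Finset.mem_erase.mpr ⟨fun hh => (Finset.mem_erase.mp habS).1 hh.symm, hvw⟩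
      have cvw : ConnIn (T.erase s(a, b)) v w := connIn_of_mem hvw' hvwne
      have hreach' : ConnIn (insert s(a, b) S') k v := by
        rw [hS', Finset.insert_erase habS]
        exact hreach
      have herase : T'.erase s(a, b) = insert s(w, k) S' := by
        rw [hT', hS', Finset.erase_insert_of_ne (Ne.symm hwkcase)]
      rw [herase] at h
      rcases connIn_insert_elim h with h1 | ⟨h1, h2⟩ | ⟨h1, h2⟩
      · exact hA_e (connIn_mono hS'sub h1)
      · -- a ~ w, k ~ b in S'
        rcases connIn_insert_elim hreach' with g1 | ⟨g1, g2⟩ | ⟨g1, g2⟩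
        · -- k ~ v in S'
          exact hA_e (((connIn_mono hS'sub h1).trans cvw.symm).trans
            ((connIn_mono hS'sub g1).symm.trans (connIn_mono hS'sub h2)))
        · -- k ~ a, b ~ v in S'
          exact hA_e (connIn_mono hS'sub (g1.symm.trans h2))
        · -- k ~ b, a ~ v in S'
          exact hA_vw (connIn_mono hS'S (h1.symm.trans g2)).symm
      · -- a ~ k, w ~ b in S'
        rcases connIn_insert_elim hreach' with g1 | ⟨g1, g2⟩ | ⟨g1, g2⟩
        · exact hA_e ((((connIn_mono hS'sub h1).trans (connIn_mono hS'sub g1)).trans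
            cvw).trans (connIn_mono hS'sub h2))
        · exact hA_vw (connIn_mono hS'S (h2.trans g2)).symm
        · exact hA_e (connIn_mono hS'sub (h1.trans g1))
end

section
/- Let G = (V, E) be a finite simple graph with nonnegative edge costs ℓ : E → ℝ. Let T ⊆ E be a tree subgraph and let v, w, k ∈ V(T) be three distinct vertices such that the three edges {v, w}, {v, k}, {w, k} all belong to E and ℓ({v, w}) ≥ ℓ({v, k}) and ℓ({v, w}) ≥ ℓ({w, k}). If {v, w} ∈ T, then there exists a tree subgraph T' with V(T') = V(T), with cost(T') ≤ cost(T), with {v, w} ∉ T', and such that T ∖ {{v, w}, {v, k}, {w, k}} = T' ∖ {{v, w}, {v, k}, {w, k}}. -/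
variable {V : Type*} [Fintype V] [DecidableEq V]

open SimpleGraph

lemma erase_graph_eq (T : Finset (Sym2 V)) (e : Sym2 V) :
    fromEdgeSet (↑(T.erase e) : Set (Sym2 V)) =
      (fromEdgeSet (↑T : Set (Sym2 V))) \ fromEdgeSet {e} := by
  ext a b
  simp only [fromEdgeSet_adj, Finset.coe_erase, Set.mem_diff, Set.mem_singleton_iff,
    sdiff_adj, Finset.mem_coe, ne_eq]
  tauto

lemma reach_split_aux (T : Finset (Sym2 V)) (v w : V) {x y : V}
    (p : (fromEdgeSet (↑T : Set (Sym2 V))).Walk x y) :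
    ConnIn (T.erase s(v,w)) x y ∨ (ConnIn (T.erase s(v,w)) x v ∧ ConnIn (T.erase s(v,w)) y w)
      ∨ (ConnIn (T.erase s(v,w)) x w ∧ ConnIn (T.erase s(v,w)) y v) := by
  induction p with
  | nil => exact Or.inl (Reachable.refl _)
  | @cons a b y hab p ih =>
    by_cases hc : s(a, b) = s(v, w)
    · rw [Sym2.eq_iff] at hc
      rcases hc with ⟨rfl, rfl⟩ | ⟨rfl, rfl⟩
      · rcases ih with h' | ⟨h1, h2⟩ | ⟨h1, h2⟩
        · exact Or.inr (Or.inl ⟨Reachable.refl _, h'.symm⟩)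
        · exact Or.inr (Or.inl ⟨Reachable.refl _, h2⟩)
        · exact Or.inl h2.symm
      · rcases ih with h' | ⟨h1, h2⟩ | ⟨h1, h2⟩
        · exact Or.inr (Or.inr ⟨Reachable.refl _, h'.symm⟩)
        · exact Or.inl h2.symm
        · exact Or.inr (Or.inr ⟨Reachable.refl _, h2⟩)
    · have hadj : (fromEdgeSet (↑(T.erase s(v,w)) : Set (Sym2 V))).Adj a b := by
        rw [fromEdgeSet_adj] at hab ⊢
        exact ⟨by simpa [Finset.mem_erase, hc] using hab.1, hab.2⟩
      rcases ih with h' | ⟨h1, h2⟩ | ⟨h1, h2⟩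
      · exact Or.inl (hadj.reachable.trans h')
      · exact Or.inr (Or.inl ⟨hadj.reachable.trans h1, h2⟩)
      · exact Or.inr (Or.inr ⟨hadj.reachable.trans h1, h2⟩)

lemma reach_split (T : Finset (Sym2 V)) (v w x : V) (h : ConnIn T x v) :
    ConnIn (T.erase s(v,w)) x v ∨ ConnIn (T.erase s(v,w)) x w := by
  obtain ⟨p⟩ := h
  rcases reach_split_aux T v w p with h' | ⟨h1, _⟩ | ⟨h1, h2⟩
  · exact Or.inl h'
  · exact Or.inl h1
  · exact Or.inr h1

lemma swap_step (G : SimpleGraph V) (len : Sym2 V → ℝ)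
    (T : Finset (Sym2 V)) (hT : IsTreeSubgraph G T)
    (v w k : V) (hvw : v ≠ w) (hvk : v ≠ k) (hwk : w ≠ k)
    (hkT : k ∈ edgeVerts T)
    (e3 : s(w, k) ∈ G.edgeSet)
    (h2 : len s(w, k) ≤ len s(v, w))
    (hmem : s(v, w) ∈ T)
    (hkv : ConnIn (T.erase s(v,w)) k v) :
    IsTreeSubgraph G (insert s(w,k) (T.erase s(v,w))) ∧
    edgeVerts (insert s(w,k) (T.erase s(v,w))) = edgeVerts T ∧
    (∑ e ∈ insert s(w,k) (T.erase s(v,w)), len e) ≤ (∑ e ∈ T, len e) ∧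
    s(v,w) ∉ insert s(w,k) (T.erase s(v,w)) := by
  obtain ⟨hsub, hne, hconn, hacy⟩ := hT
  set T' : Finset (Sym2 V) := insert s(w,k) (T.erase s(v,w)) with hT'
  -- v and w are vertices of T
  have hvT : v ∈ edgeVerts T := by
    simp only [edgeVerts, Finset.mem_filter, Finset.mem_univ, true_and]
    exact ⟨s(v,w), hmem, by simp⟩
  have hwT : w ∈ edgeVerts T := by
    simp only [edgeVerts, Finset.mem_filter, Finset.mem_univ, true_and]
    exact ⟨s(v,w), hmem, by simp⟩
  -- {v,w} is a bridge: v and w are not connected after its removal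
  have hnr : ¬ ConnIn (T.erase s(v,w)) v w := by
    rw [SimpleGraph.isAcyclic_iff_forall_adj_isBridge] at hacy
    have hadj : (fromEdgeSet (↑T : Set (Sym2 V))).Adj v w := by
      rw [fromEdgeSet_adj]; exact ⟨by exact_mod_cast hmem, hvw⟩
    have hb := hacy hadj
    rw [isBridge_iff] at hb
    intro hr
    exact hb (by rw [ConnIn, erase_graph_eq] at hr; exact hr)
  have hnkw : ¬ ConnIn (T.erase s(v,w)) k w := fun h => hnr (hkv.symm.trans h)
  -- the new edge is not already present
  have hwkT : s(w,k) ∉ T.erase s(v,w) := by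
    intro h
    exact hnkw (SimpleGraph.Adj.reachable (by
      rw [fromEdgeSet_adj]; exact ⟨by exact_mod_cast h, hwk⟩)).symm
  have hmono : fromEdgeSet (↑(T.erase s(v,w)) : Set (Sym2 V)) ≤
      fromEdgeSet (↑T' : Set (Sym2 V)) := by
    apply fromEdgeSet_mono
    rw [hT']
    exact_mod_cast Finset.subset_insert _ _
  have hadjwk : (fromEdgeSet (↑T' : Set (Sym2 V))).Adj w k := by
    rw [fromEdgeSet_adj]
    exact ⟨by simp [hT'], hwk⟩
  -- every vertex of T reaches v in T'
  have hreach : ∀ x ∈ edgeVerts T, (fromEdgeSet (↑T' : Set (Sym2 V))).Reachable x v := by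
    intro x hx
    rcases reach_split T v w x (hconn x hx v hvT) with h' | h'
    · exact Reachable.mono hmono h'
    · exact (Reachable.mono hmono h').trans
        (hadjwk.reachable.trans (Reachable.mono hmono hkv))
  have hsub' : edgeVerts T' ⊆ edgeVerts T := by
    intro x hx
    simp only [edgeVerts, Finset.mem_filter, Finset.mem_univ, true_and] at hx
    obtain ⟨e, he, hxe⟩ := hx
    rcases Finset.mem_insert.mp he with rfl | he
    · rcases Sym2.mem_iff.mp hxe with rfl | rfl
      · exact hwT
      · exact hkT
    · simp only [edgeVerts, Finset.mem_filter, Finset.mem_univ, true_and]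
      exact ⟨e, Finset.mem_of_mem_erase he, hxe⟩
  have hverts : edgeVerts T' = edgeVerts T := by
    apply Finset.Subset.antisymm hsub'
    intro x hx
    simp only [edgeVerts, Finset.mem_filter, Finset.mem_univ, true_and] at hx ⊢
    obtain ⟨e, he, hxe⟩ := hx
    by_cases hc : e = s(v,w)
    · subst hc
      rcases Sym2.mem_iff.mp hxe with h | h
      · -- x = v : v has an incident edge in T.erase s(v,w) since k reaches v there
        obtain ⟨p⟩ := hkv.symm
        cases p with
        | nil => exact absurd rfl hvk
        | @cons _ y _ hadj q =>
          rw [fromEdgeSet_adj] at hadj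
          exact ⟨s(v, y), Finset.mem_insert_of_mem (by exact_mod_cast hadj.1), by simp [h]⟩
      · exact ⟨s(w,k), Finset.mem_insert_self _ _, by simp [h]⟩
    · exact ⟨e, Finset.mem_insert_of_mem (Finset.mem_erase_of_ne_of_mem hc he), hxe⟩
  -- acyclicity
  have hacy' : (fromEdgeSet (↑T' : Set (Sym2 V))).IsAcyclic := by
    intro u c hc
    by_cases hwke : s(w,k) ∈ c.edges
    · have := (adj_and_reachable_delete_edges_iff_exists_cycle
        (G := fromEdgeSet (↑T' : Set (Sym2 V)))).mpr ⟨u, c, hc, hwke⟩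
      have heq : (fromEdgeSet (↑T' : Set (Sym2 V))) \ fromEdgeSet {s(w,k)} =
          fromEdgeSet (↑(T.erase s(v,w)) : Set (Sym2 V)) := by
        rw [← erase_graph_eq, hT', Finset.erase_insert hwkT]
      rw [deleteEdges, heq] at this
      exact hnkw this.2.symm
    · have hce : ∀ e ∈ c.edges, e ∈ (fromEdgeSet (↑T : Set (Sym2 V))).edgeSet := by
        intro e he
        have h1 := c.edges_subset_edgeSet he
        rw [edgeSet_fromEdgeSet] at h1 ⊢
        refine ⟨?_, h1.2⟩
        have h3 : e ∈ (↑T' : Set (Sym2 V)) := h1.1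
        simp only [hT', Finset.coe_insert, Set.mem_insert_iff, Finset.mem_coe] at h3
        rcases h3 with rfl | h3
        · exact absurd he hwke
        · exact_mod_cast Finset.mem_of_mem_erase h3
      exact hacy (c.transfer _ hce) (hc.transfer hce)
  refine ⟨⟨?_, Finset.insert_nonempty _ _, ?_, hacy'⟩, hverts, ?_, ?_⟩
  · intro e he
    simp only [hT', Finset.coe_insert, Set.mem_insert_iff, Finset.mem_coe] at he
    rcases he with rfl | he
    · exact e3
    · exact hsub (by exact_mod_cast Finset.mem_of_mem_erase he)
  · intro a ha b hb
    exact ((hreach a (hsub' ha)).trans (hreach b (hsub' hb)).symm)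
  · rw [hT', Finset.sum_insert hwkT]
    have := Finset.sum_erase_add T len hmem
    linarith
  · simp only [hT', Finset.mem_insert, Finset.mem_erase]
    rintro (h | ⟨h, _⟩)
    · rw [Sym2.eq_iff] at h
      rcases h with ⟨h1, h2⟩ | ⟨h1, h2⟩
      · exact hwk h2
      · exact hvk h1
    · exact h rfl


/-- If three distinct vertices v, w, k of a tree subgraph T form a triangle in G whose most
expensive edge is {v, w}, and {v, w} ∈ T, then there is a tree subgraph T'\'' with the same
vertices, no greater cost, avoiding {v, w}, and agreeing with T outside the triangle. -/
theorem tree_triangle_swap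
    (G : SimpleGraph V) (len : Sym2 V → ℝ) (hlen : ∀ e ∈ G.edgeSet, 0 ≤ len e)
    (T : Finset (Sym2 V)) (hT : IsTreeSubgraph G T)
    (v w k : V) (hvw : v ≠ w) (hvk : v ≠ k) (hwk : w ≠ k)
    (hvT : v ∈ edgeVerts T) (hwT : w ∈ edgeVerts T) (hkT : k ∈ edgeVerts T)
    (e1 : s(v, w) ∈ G.edgeSet) (e2 : s(v, k) ∈ G.edgeSet) (e3 : s(w, k) ∈ G.edgeSet)
    (h1 : len s(v, k) ≤ len s(v, w)) (h2 : len s(w, k) ≤ len s(v, w))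
    (hmem : s(v, w) ∈ T) :
    ∃ T' : Finset (Sym2 V), IsTreeSubgraph G T' ∧
      edgeVerts T' = edgeVerts T ∧
      (∑ e ∈ T', len e) ≤ (∑ e ∈ T, len e) ∧
      s(v, w) ∉ T' ∧
      T \ {s(v, w), s(v, k), s(w, k)} = T' \ {s(v, w), s(v, k), s(w, k)} := by
  have hswap : s(w,v) = s(v,w) := Sym2.eq_swap
  rcases reach_split T v w k (hT.2.2.1 k hkT v hvT) with hkv | hkw
  · obtain ⟨ht, hv, hc, hn⟩ := swap_step G len T hT v w k hvw hvk hwk hkT e3 h2 hmem hkv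
    refine ⟨insert s(w,k) (T.erase s(v,w)), ht, hv, hc, hn, ?_⟩
    ext x
    simp only [Finset.mem_sdiff, Finset.mem_insert, Finset.mem_erase, Finset.mem_singleton]
    constructor
    · rintro ⟨hxT, hS⟩
      push_neg at hS
      exact ⟨Or.inr ⟨hS.1, hxT⟩, by push_neg; exact hS⟩
    · rintro ⟨hx, hS⟩
      push_neg at hS
      rcases hx with rfl | ⟨_, hxT⟩
      · exact absurd rfl hS.2.2
      · exact ⟨hxT, by push_neg; exact hS⟩
  · have hkw' : ConnIn (T.erase s(w,v)) k w := by rwa [hswap]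
    obtain ⟨ht, hv, hc, hn⟩ := swap_step G len T hT w v k hvw.symm hwk hvk hkT e2
      (by rwa [hswap]) (by rwa [hswap]) hkw'
    rw [hswap] at ht hv hc hn
    refine ⟨insert s(v,k) (T.erase s(v,w)), ht, hv, hc, hn, ?_⟩
    ext x
    simp only [Finset.mem_sdiff, Finset.mem_insert, Finset.mem_erase, Finset.mem_singleton]
    constructor
    · rintro ⟨hxT, hS⟩
      push_neg at hS
      exact ⟨Or.inr ⟨hS.1, hxT⟩, by push_neg; exact hS⟩
    · rintro ⟨hx, hS⟩
      push_neg at hS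
      rcases hx with rfl | ⟨_, hxT⟩
      · exact absurd rfl hS.2.1
      · exact ⟨hxT, by push_neg; exact hS⟩
end

section
/- (Proposition 1, tree BPCCSP.) Let T ⊆ E be an optimal tree for the tree BPCCSP and let v, w, k ∈ V(T) be three distinct visited vertices such that the three edges {v, w}, {v, k}, {w, k} all belong to E and {v, w} is at least as expensive as each of the other two, i.e., ℓ({v, w}) ≥ ℓ({v, k}) and ℓ({v, w}) ≥ ℓ({w, k}). Then either {v, w} ∉ T, or there exists another optimal tree T' such that {v, w} ∉ T' and T ∖ {{v, w}, {v, k}, {w, k}} = T' ∖ {{v, w}, {v, k}, {w, k}}. -/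
variable {V : Type*} [Fintype V] [DecidableEq V]

/-- An instance of a budgeted prize-collecting covering subgraph problem: a finite simple
graph with a depot, nonnegative edge costs, a positive budget, nonnegative vertex prizes,
neighbourhoods, nonnegative coverage prizes, and coverage capacities. -/
structure BPCCSPInstance (V : Type*) [Fintype V] [DecidableEq V] where
  G : SimpleGraph V
  depot : V
  len : Sym2 V → ℝ
  len_nonneg : ∀ e ∈ G.edgeSet, 0 ≤ len e
  budget : ℝ
  budget_pos : 0 < budget
  prize : V → ℝ
  prize_nonneg : ∀ v, 0 ≤ prize v
  nbhd : V → Finset V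
  nbhd_not_self : ∀ v, v ∉ nbhd v
  covPrize : V → V → ℝ
  covPrize_nonneg : ∀ v w, 0 ≤ covPrize v w
  cap : V → ℕ

/-- A coverage assignment for a visited set `S`: a partial map `σ` from `V ∖ S` to `S`
such that `σ v ∈ N_v ∩ S` whenever defined, and every `w ∈ S` has at most `c_w` preimages. -/
def IsCoverAssign (I : BPCCSPInstance V) (S : Finset V) (σ : V → Option V) : Prop :=
  (∀ v w, σ v = some w → v ∉ S ∧ w ∈ S ∧ w ∈ I.nbhd v) ∧
  (∀ w ∈ S, (Finset.univ.filter (fun v => σ v = some w)).card ≤ I.cap w)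

/-- The value of a coverage assignment: the sum of `q_{v, σ(v)}` over all `v` where `σ` is
defined. -/
def assignValue (I : BPCCSPInstance V) (σ : V → Option V) : ℝ :=
  ∑ v, Option.elim (σ v) 0 (fun w => I.covPrize v w)

/-- The collected prize of a visited set `S`: the sum of the prizes of the vertices of
`S ∖ {depot}` plus the maximum value of a coverage assignment for `S`. -/
noncomputable def collectedPrize (I : BPCCSPInstance V) (S : Finset V) : ℝ :=
  (∑ v ∈ S.erase I.depot, I.prize v) +
    sSup {x : ℝ | ∃ σ, IsCoverAssign I S σ ∧ x = assignValue I σ}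

/-- A tree is feasible if it visits the depot and its cost does not exceed the budget. -/
def IsFeasibleTree (I : BPCCSPInstance V) (T : Finset (Sym2 V)) : Prop :=
  IsTreeSubgraph I.G T ∧ I.depot ∈ edgeVerts T ∧ (∑ e ∈ T, I.len e) ≤ I.budget

/-- A tree is optimal if it is feasible and its collected prize is maximal among all
feasible trees. -/
def IsOptimalTree (I : BPCCSPInstance V) (T : Finset (Sym2 V)) : Prop :=
  IsFeasibleTree I T ∧
    ∀ T' : Finset (Sym2 V), IsFeasibleTree I T' →
      collectedPrize I (edgeVerts T') ≤ collectedPrize I (edgeVerts T)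

open SimpleGraph in
private lemma mem_edgeVerts_iff {T : Finset (Sym2 V)} {x : V} :
    x ∈ edgeVerts T ↔ ∃ e ∈ T, x ∈ e := by
  simp [edgeVerts]

open SimpleGraph in
private lemma fromEdgeSet_erase_eq (T : Finset (Sym2 V)) (e : Sym2 V) :
    fromEdgeSet (↑(T.erase e) : Set (Sym2 V)) =
      fromEdgeSet (↑T : Set (Sym2 V)) \ fromEdgeSet {e} := by
  ext x y
  simp only [fromEdgeSet_adj, Finset.coe_erase, Set.mem_diff, Set.mem_singleton_iff,
    SimpleGraph.sdiff_adj]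
  tauto

open SimpleGraph in
private lemma reach_split_walk {G : SimpleGraph V} {a b : V} :
    ∀ {u : V}, G.Walk u a →
      (G \ fromEdgeSet {s(a, b)}).Reachable u a ∨
        (G \ fromEdgeSet {s(a, b)}).Reachable u b
  | _, SimpleGraph.Walk.nil => Or.inl (Reachable.refl a)
  | u, SimpleGraph.Walk.cons (v := y) h' p => by
    by_cases hxy : s(u, y) = s(a, b)
    · rw [Sym2.eq_iff] at hxy
      rcases hxy with ⟨rfl, rfl⟩ | ⟨rfl, rfl⟩
      · exact Or.inl (Reachable.refl _)
      · exact Or.inr (Reachable.refl _)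
    · have hadj : (G \ fromEdgeSet {s(a, b)}).Adj u y := by
        simp only [SimpleGraph.sdiff_adj, fromEdgeSet_adj, Set.mem_singleton_iff]
        exact ⟨h', fun hc => hxy hc.1⟩
      rcases reach_split_walk p with h1 | h1
      · exact Or.inl (hadj.reachable.trans h1)
      · exact Or.inr (hadj.reachable.trans h1)

open SimpleGraph in
private lemma reach_split_s3 {G : SimpleGraph V} {u a : V} (b : V) (h : G.Reachable u a) :
    (G \ fromEdgeSet {s(a, b)}).Reachable u a ∨
      (G \ fromEdgeSet {s(a, b)}).Reachable u b := by
  obtain ⟨p⟩ := h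
  exact reach_split_walk p

open SimpleGraph in
private lemma isAcyclic_mono {G H : SimpleGraph V} (hle : G ≤ H) (hH : H.IsAcyclic) :
    G.IsAcyclic := by
  intro u p hp
  have hq : ∀ e ∈ p.edges, e ∈ H.edgeSet :=
    fun e he => edgeSet_mono hle (p.edges_subset_edgeSet he)
  exact hH (p.transfer H hq) (hp.transfer hq)

open SimpleGraph in
private lemma acyclic_insert {S : Finset (Sym2 V)} {b c : V} (hbc : b ≠ c)
    (hS : (fromEdgeSet (↑S : Set (Sym2 V))).IsAcyclic)
    (hnr : ¬ (fromEdgeSet (↑S : Set (Sym2 V))).Reachable b c) :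
    (fromEdgeSet (↑(insert s(b, c) S) : Set (Sym2 V))).IsAcyclic := by
  intro u p hp
  by_cases he : s(b, c) ∈ p.edges
  · have hiff := adj_and_reachable_delete_edges_iff_exists_cycle.mpr ⟨u, p, hp, he⟩
    apply hnr
    refine hiff.2.mono ?_
    intro x y hxy
    simp only [SimpleGraph.sdiff_adj, fromEdgeSet_adj, Finset.coe_insert,
      Set.mem_insert_iff, Set.mem_singleton_iff, Finset.mem_coe] at hxy ⊢
    obtain ⟨⟨hmem, hxny⟩, hne⟩ := hxy
    have : s(x, y) ≠ s(b, c) := fun hc => hne ⟨hc, hxny⟩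
    rcases hmem with h | h
    · exact absurd h this
    · exact ⟨h, hxny⟩
  · have hq : ∀ e ∈ p.edges, e ∈ (fromEdgeSet (↑S : Set (Sym2 V))).edgeSet := by
      intro e he'
      have h1 := p.edges_subset_edgeSet he'
      rw [edgeSet_fromEdgeSet] at h1 ⊢
      refine ⟨?_, h1.2⟩
      have h2 := h1.1
      simp only [Finset.coe_insert, Set.mem_insert_iff, Finset.mem_coe] at h2
      rcases h2 with rfl | h2
      · exact absurd he' he
      · exact h2
    exact hS (p.transfer _ hq) (hp.transfer hq)

open SimpleGraph in
private lemma exists_edge_of_reachable {S : Set (Sym2 V)} {x y : V}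
    (h : (fromEdgeSet S).Reachable x y) (hxy : x ≠ y) : ∃ e ∈ S, x ∈ e := by
  obtain ⟨p⟩ := h
  cases p with
  | nil => exact absurd rfl hxy
  | @cons _ z _ h' _ =>
    exact ⟨s(x, z), ((fromEdgeSet_adj _).mp h').1, Sym2.mem_mk_left x z⟩

open SimpleGraph in
private lemma aux_swap (I : BPCCSPInstance V) (T : Finset (Sym2 V)) (hT : IsOptimalTree I T)
    (a b c : V) (hab : a ≠ b) (hac : a ≠ c) (hbc : b ≠ c)
    (haT : a ∈ edgeVerts T) (hbT : b ∈ edgeVerts T) (hcT : c ∈ edgeVerts T)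
    (e3 : s(b, c) ∈ I.G.edgeSet)
    (h2 : I.len s(b, c) ≤ I.len s(a, b))
    (hmem : s(a, b) ∈ T)
    (hconn : ConnIn (T.erase s(a, b)) c a) :
    IsOptimalTree I (insert s(b, c) (T.erase s(a, b))) ∧
      s(a, b) ∉ insert s(b, c) (T.erase s(a, b)) := by
  classical
  set S := T.erase s(a, b) with hSdef
  set T' := insert s(b, c) S with hT'def
  have hGS : fromEdgeSet (↑S : Set (Sym2 V)) =
      fromEdgeSet (↑T : Set (Sym2 V)) \ fromEdgeSet {s(a, b)} :=
    fromEdgeSet_erase_eq T s(a, b)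
  obtain ⟨⟨⟨hsub, hne0, hconnT, hacyT⟩, hdep, hcost⟩, hopt⟩ := hT
  -- the endpoints b, c are not reachable in S
  have hadjab : (fromEdgeSet (↑T : Set (Sym2 V))).Adj a b := by
    rw [fromEdgeSet_adj]; exact ⟨hmem, hab⟩
  have hnr : ¬ (fromEdgeSet (↑S : Set (Sym2 V))).Reachable b c := by
    intro hr
    have hba : (fromEdgeSet (↑S : Set (Sym2 V))).Reachable b a := hr.trans hconn
    have := adj_and_reachable_delete_edges_iff_exists_cycle.mp
      ⟨hadjab, by show (fromEdgeSet (↑T : Set (Sym2 V)) \ fromEdgeSet {s(a, b)}).Reachable a b; rw [← hGS]; exact hba.symm⟩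
    obtain ⟨u, p, hp, _⟩ := this
    exact hacyT p hp
  have hne : s(b, c) ≠ s(a, b) := by
    intro h
    rw [Sym2.eq_iff] at h
    rcases h with ⟨h1', _⟩ | ⟨_, h2'⟩
    · exact hab h1'.symm
    · exact hac h2'.symm
  have hnotinS : s(b, c) ∉ S := by
    intro h
    exact hnr (SimpleGraph.Adj.reachable (by rw [fromEdgeSet_adj]; exact ⟨h, hbc⟩))
  have hnotinT : s(b, c) ∉ T := fun h => hnotinS (Finset.mem_erase.mpr ⟨hne, h⟩)
  have habnotin : s(a, b) ∉ T' := by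
    rw [hT'def, Finset.mem_insert]
    rintro (h | h)
    · exact hne h.symm
    · exact (Finset.mem_erase.mp h).1 rfl
  -- acyclicity of T'
  have hSle : (↑S : Set (Sym2 V)) ⊆ (↑T : Set (Sym2 V)) := by
    intro e he; exact Finset.mem_coe.mpr (Finset.mem_of_mem_erase (Finset.mem_coe.mp he))
  have hacyS : (fromEdgeSet (↑S : Set (Sym2 V))).IsAcyclic :=
    isAcyclic_mono (fromEdgeSet_mono hSle) hacyT
  have hacy' : (fromEdgeSet (↑T' : Set (Sym2 V))).IsAcyclic := acyclic_insert hbc hacyS hnr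
  -- edge vertices are unchanged
  have hSleT' : (↑S : Set (Sym2 V)) ⊆ (↑T' : Set (Sym2 V)) := by
    intro e he
    exact Finset.mem_coe.mpr (Finset.mem_insert_of_mem (Finset.mem_coe.mp he))
  have hGSleT' : fromEdgeSet (↑S : Set (Sym2 V)) ≤ fromEdgeSet (↑T' : Set (Sym2 V)) :=
    fromEdgeSet_mono hSleT'
  have haS : ∃ e ∈ S, a ∈ e := by
    obtain ⟨e, he, hae⟩ := exists_edge_of_reachable (S := (↑S : Set (Sym2 V)))
      hconn.symm hac
    exact ⟨e, Finset.mem_coe.mp he, hae⟩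
  have hEV : edgeVerts T' = edgeVerts T := by
    ext x
    rw [mem_edgeVerts_iff, mem_edgeVerts_iff]
    constructor
    · rintro ⟨e, he, hx⟩
      rw [hT'def, Finset.mem_insert] at he
      rcases he with rfl | he
      · rw [Sym2.mem_iff] at hx
        rcases hx with rfl | rfl
        · exact mem_edgeVerts_iff.mp hbT
        · exact mem_edgeVerts_iff.mp hcT
      · exact ⟨e, Finset.mem_of_mem_erase he, hx⟩
    · rintro ⟨e, he, hx⟩
      by_cases hee : e = s(a, b)
      · subst hee
        rw [Sym2.mem_iff] at hx
        rcases hx with rfl | rfl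
        · obtain ⟨e', he', hxe'⟩ := haS
          exact ⟨e', Finset.mem_insert_of_mem he', hxe'⟩
        · exact ⟨s(x, c), Finset.mem_insert_self _ _, Sym2.mem_mk_left x c⟩
      · exact ⟨e, Finset.mem_insert_of_mem (Finset.mem_erase.mpr ⟨hee, he⟩), hx⟩
  -- connectivity of T'
  have hadjbc' : (fromEdgeSet (↑T' : Set (Sym2 V))).Adj b c := by
    rw [fromEdgeSet_adj]
    exact ⟨Finset.mem_coe.mpr (Finset.mem_insert_self _ _), hbc⟩
  have hba' : (fromEdgeSet (↑T' : Set (Sym2 V))).Reachable b a :=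
    hadjbc'.reachable.trans (Reachable.mono hGSleT' hconn)
  have hreach_a : ∀ u ∈ edgeVerts T',
      (fromEdgeSet (↑T' : Set (Sym2 V))).Reachable u a := by
    intro u hu
    rw [hEV] at hu
    have h1 : (fromEdgeSet (↑T : Set (Sym2 V))).Reachable u a := hconnT u hu a haT
    have h3 := reach_split_s3 b h1
    rw [← hGS] at h3
    rcases h3 with h3 | h3
    · exact Reachable.mono hGSleT' h3
    · exact (Reachable.mono hGSleT' h3).trans hba'
  have hconn' : ∀ u ∈ edgeVerts T', ∀ u' ∈ edgeVerts T', ConnIn T' u u' := by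
    intro u hu u' hu'
    exact (hreach_a u hu).trans (hreach_a u' hu').symm
  -- cost
  have hcost' : (∑ e ∈ T', I.len e) ≤ I.budget := by
    have hs1 : (∑ e ∈ T', I.len e) = I.len s(b, c) + ∑ e ∈ S, I.len e :=
      Finset.sum_insert hnotinS
    have hs2 : (∑ e ∈ S, I.len e) + I.len s(a, b) = ∑ e ∈ T, I.len e :=
      Finset.sum_erase_add T _ hmem
    have := hcost
    rw [hs1]
    linarith
  -- feasibility
  have hfeas : IsFeasibleTree I T' := by
    refine ⟨⟨?_, ⟨s(b, c), Finset.mem_insert_self _ _⟩, hconn', hacy'⟩, ?_, hcost'⟩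
    · intro e he
      rw [Finset.mem_coe, hT'def, Finset.mem_insert] at he
      rcases he with rfl | he
      · exact e3
      · exact hsub (Finset.mem_coe.mpr (Finset.mem_of_mem_erase he))
    · rw [hEV]; exact hdep
  refine ⟨⟨hfeas, ?_⟩, habnotin⟩
  intro T'' hT''
  rw [hEV]
  exact hopt T'' hT''

/-- Proposition 1 (tree BPCCSP): if v, w, k are distinct visited vertices of an optimal
tree T forming a triangle in G whose most expensive edge is {v, w}, then either
{v, w} ∉ T or there is another optimal tree T'\'' with {v, w} ∉ T'\'' agreeing with T
outside the triangle. -/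
theorem tree_bpccsp_symmetry_breaking
    (I : BPCCSPInstance V) (T : Finset (Sym2 V)) (hT : IsOptimalTree I T)
    (v w k : V) (hvw : v ≠ w) (hvk : v ≠ k) (hwk : w ≠ k)
    (hvT : v ∈ edgeVerts T) (hwT : w ∈ edgeVerts T) (hkT : k ∈ edgeVerts T)
    (e1 : s(v, w) ∈ I.G.edgeSet) (e2 : s(v, k) ∈ I.G.edgeSet) (e3 : s(w, k) ∈ I.G.edgeSet)
    (h1 : I.len s(v, k) ≤ I.len s(v, w)) (h2 : I.len s(w, k) ≤ I.len s(v, w)) :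
    s(v, w) ∉ T ∨
      ∃ T' : Finset (Sym2 V), IsOptimalTree I T' ∧ s(v, w) ∉ T' ∧
        T \ {s(v, w), s(v, k), s(w, k)} = T' \ {s(v, w), s(v, k), s(w, k)} := by
  classical
  by_cases hmem : s(v, w) ∈ T
  · right
    have hconn0 : ConnIn T k v := hT.1.1.2.2.1 k hkT v hvT
    have hsplit := reach_split_s3 w hconn0
    rw [← fromEdgeSet_erase_eq] at hsplit
    have hswap : s(w, v) = s(v, w) := Sym2.eq_swap
    rcases hsplit with hs | hs
    · -- k reaches v after deleting {v,w}; use T' = insert {w,k} (T.erase {v,w})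
      obtain ⟨hopt', hnotin⟩ := aux_swap I T hT v w k hvw hvk hwk hvT hwT hkT e3 h2 hmem hs
      refine ⟨insert s(w, k) (T.erase s(v, w)), hopt', ?_, ?_⟩
      · intro hcon
        rw [Finset.mem_insert] at hcon
        rcases hcon with hcon | hcon
        · rw [Sym2.eq_iff] at hcon
          rcases hcon with ⟨h1', _⟩ | ⟨h2', _⟩
          · exact hvw h1'
          · exact hvk h2'
        · exact (Finset.mem_erase.mp hcon).1 rfl
      · ext e
        simp only [Finset.mem_sdiff, Finset.mem_insert, Finset.mem_erase,
          Finset.mem_singleton]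
        tauto
    · -- k reaches w after deleting {v,w}; use T' = insert {v,k} (T.erase {w,v})
      have hmem' : s(w, v) ∈ T := by rw [hswap]; exact hmem
      have hconn' : ConnIn (T.erase s(w, v)) k w := by rw [hswap]; exact hs
      have h1' : I.len s(v, k) ≤ I.len s(w, v) := by rw [hswap]; exact h1
      obtain ⟨hopt', hnotin⟩ := aux_swap I T hT w v k hvw.symm hwk hvk hwT hvT hkT e2
        h1' hmem' hconn'
      refine ⟨insert s(v, k) (T.erase s(w, v)), hopt', ?_, ?_⟩
      · rw [← hswap]; exact hnotin
      · rw [hswap]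
        ext e
        simp only [Finset.mem_sdiff, Finset.mem_insert, Finset.mem_erase,
          Finset.mem_singleton]
        tauto
  · exact Or.inl hmem
end
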